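/- Every pure simplicial complex has a partition extender. That is, for every pure d-dimensional simplicial complex Δ there exists a pure d-dimensional simplicial complex Γ such that Δ ⊆ Γ, Γ is partitionable, and the relative complex (Γ, Δ) is partitionable. -/
import Mathlib


/-- A simplicial complex on vertex set `ℕ`: a finite collection of finite sets of
vertices (faces) closed under taking subsets. -/
def IsComplex (Δ : Finset (Finset ℕ)) : Prop :=
  ∀ σ ∈ Δ, ∀ τ ⊆ σ, τ ∈ Δ

/-- `F` is a facet (maximal face) of `Δ`. -/
def IsFacet (Δ : Finset (Finset ℕ)) (F : Finset ℕ) : Prop :=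
  F ∈ Δ ∧ ∀ G ∈ Δ, F ⊆ G → F = G

/-- `Δ` is a pure `d`-dimensional complex: it is nonempty and every facet has
cardinality `d + 1` (i.e. dimension `d`). -/
def PureDim (Δ : Finset (Finset ℕ)) (d : ℤ) : Prop :=
  Δ.Nonempty ∧ ∀ F : Finset ℕ, IsFacet Δ F → (F.card : ℤ) = d + 1

/-- `S` is a partitioning of the set of faces `P` (ordered by inclusion) into Boolean
intervals topped by maximal elements of `P`.  Each pair `p ∈ S` represents the interval
`[p.1, p.2]`; the intervals must be full Boolean intervals contained in `P`
(second condition), their tops must be maximal elements of `P` (first condition),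
and every element of `P` must lie in exactly one interval (third condition). -/
def IsPartitioning (S : Finset (Finset ℕ × Finset ℕ)) (P : Finset (Finset ℕ)) : Prop :=
  (∀ p ∈ S, p.1 ⊆ p.2 ∧ p.2 ∈ P ∧ ∀ c ∈ P, p.2 ⊆ c → p.2 = c) ∧
  (∀ p ∈ S, ∀ e : Finset ℕ, p.1 ⊆ e → e ⊆ p.2 → e ∈ P) ∧
  (∀ e ∈ P, ∃! p : Finset ℕ × Finset ℕ, p ∈ S ∧ p.1 ⊆ e ∧ e ⊆ p.2)

/-- A set of faces, ordered by inclusion, is partitionable if it admits a partitioning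
into Boolean intervals whose maximum elements are maximal elements. -/
def Partitionable (P : Finset (Finset ℕ)) : Prop :=
  ∃ S : Finset (Finset ℕ × Finset ℕ), IsPartitioning S P

/-- The relative complex `(Δ, ⟨F⟩)`: the faces of `Δ` not contained in `F`. -/
def relF (Δ : Finset (Finset ℕ)) (F : Finset ℕ) : Finset (Finset ℕ) :=
  Δ.filter (fun τ => ¬ τ ⊆ F)

namespace PE

open Finset

abbrev Pr := Finset ℕ × Finset ℕ

/-- Lift a set of intervals by a fixed set `γ` (to be unioned into bottoms and tops). -/
def Lift (γ : Finset ℕ) (S : Finset Pr) : Finset Pr := S.image fun p => (γ ∪ p.1, γ ∪ p.2)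

/-- `S` is an interval partition of all subsets of `V` of size at most `k`,
with all tops of size exactly `k`. -/
def IsQPart (S : Finset Pr) (V : Finset ℕ) (k : ℕ) : Prop :=
  (∀ p ∈ S, p.1 ⊆ p.2 ∧ p.2 ⊆ V ∧ p.2.card = k) ∧
  (∀ e ⊆ V, e.card ≤ k → ∃! p : Pr, p ∈ S ∧ p.1 ⊆ e ∧ e ⊆ p.2)

/-- `S` is an interval partition of all *nonempty* subsets of `V` of size at most `s`,
with all tops of size exactly `s` and all bottoms nonempty. -/
def IsPPart (S : Finset Pr) (V : Finset ℕ) (s : ℕ) : Prop :=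
  (∀ p ∈ S, p.1.Nonempty ∧ p.1 ⊆ p.2 ∧ p.2 ⊆ V ∧ p.2.card = s) ∧
  (∀ e ⊆ V, e.Nonempty → e.card ≤ s → ∃! p : Pr, p ∈ S ∧ p.1 ⊆ e ∧ e ⊆ p.2)

/-- Partition of the `k`-truncated Boolean lattice on ground set `Ico a (a+n)`. -/
def QP : ℕ → ℕ → ℕ → Finset Pr
  | _, _, 0 => {(∅, ∅)}
  | _, 0, _+1 => {(∅, ∅)}
  | a, n+1, k+1 =>
      if n = k then {(∅, Finset.Ico a (a+(n+1)))}
      else QP (a+1) n (k+1) ∪ (QP (a+1) n k).image fun p => (insert a p.1, insert a p.2)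

theorem QP_spec : ∀ n k a, k ≤ n → IsQPart (QP a n k) (Finset.Ico a (a+n)) k := by
  intro n
  induction n with
  | zero =>
    intro k a hk
    have hk0 : k = 0 := Nat.le_zero.mp hk
    subst hk0
    constructor
    · intro p hp
      simp only [QP, mem_singleton] at hp
      subst hp
      simp
    · intro e _ hce
      have he : e = ∅ := Finset.card_eq_zero.mp (Nat.le_zero.mp hce)
      subst he
      refine ⟨(∅, ∅), ⟨by simp [QP], by simp⟩, ?_⟩
      rintro p ⟨hp, -, -⟩
      simpa [QP] using hp
  | succ n ih =>
    intro k a hk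
    cases k with
    | zero =>
      constructor
      · intro p hp
        simp only [QP, mem_singleton] at hp
        subst hp
        simp
      · intro e _ hce
        have he : e = ∅ := Finset.card_eq_zero.mp (Nat.le_zero.mp hce)
        subst he
        refine ⟨(∅, ∅), ⟨by simp [QP], by simp⟩, ?_⟩
        rintro p ⟨hp, -, -⟩
        simpa [QP] using hp
    | succ k =>
      by_cases hnk : n = k
      · subst hnk
        have hQ : QP a (n+1) (n+1) = {(∅, Finset.Ico a (a+(n+1)))} := by
          simp [QP]
        rw [hQ]
        constructor
        · intro p hp
          rw [mem_singleton] at hp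
          subst hp
          exact ⟨by simp, Finset.Subset.rfl, by rw [Nat.card_Ico]; omega⟩
        · intro e he _
          refine ⟨(∅, Finset.Ico a (a+(n+1))), ⟨by simp, by simp, he⟩, ?_⟩
          rintro p ⟨hp, -, -⟩
          simpa using hp
      · have hkn : k + 1 ≤ n := by omega
        have IH1 := ih (k+1) (a+1) hkn
        have IH2 := ih k (a+1) (by omega)
        have hsub : Finset.Ico (a+1) (a+1+n) ⊆ Finset.Ico a (a+(n+1)) := by
          intro x hx
          simp only [mem_Ico] at hx ⊢
          omega
        have hQ : QP a (n+1) (k+1)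
            = QP (a+1) n (k+1) ∪ (QP (a+1) n k).image (fun p => (insert a p.1, insert a p.2)) := by
          simp [QP, hnk]
        rw [hQ]
        constructor
        · intro p hp
          rcases mem_union.mp hp with hp | hp
          · obtain ⟨h1, h2, h3⟩ := IH1.1 p hp
            exact ⟨h1, h2.trans hsub, h3⟩
          · obtain ⟨q, hq, hqe⟩ := mem_image.mp hp
            obtain ⟨h1, h2, h3⟩ := IH2.1 q hq
            have hanq : a ∉ q.2 := fun hmem => by
              have := h2 hmem
              simp only [mem_Ico] at this
              omega
            subst hqe
            refine ⟨?_, ?_, ?_⟩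
            · exact insert_subset_insert _ h1
            · intro x hx
              rcases mem_insert.mp hx with rfl | hx
              · simp only [mem_Ico]; omega
              · exact hsub (h2 hx)
            · simp [Finset.card_insert_of_notMem hanq, h3]
        · intro e he hce
          by_cases hae : a ∈ e
          · have he' : e.erase a ⊆ Finset.Ico (a+1) (a+1+n) := by
              intro x hx
              obtain ⟨hxa, hxe⟩ := Finset.mem_erase.mp hx
              have := he hxe
              simp only [mem_Ico] at this ⊢
              omega
            have hce' : (e.erase a).card ≤ k := by
              rw [Finset.card_erase_of_mem hae]
              omega
            obtain ⟨q, ⟨hqS, hq1, hq2⟩, huq⟩ := IH2.2 (e.erase a) he' hce'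
            have hq2V := (IH2.1 q hqS).2.1
            refine ⟨(insert a q.1, insert a q.2), ⟨?_, ?_, ?_⟩, ?_⟩
            · exact mem_union_right _ (mem_image.mpr ⟨q, hqS, rfl⟩)
            · exact insert_subset hae (hq1.trans (erase_subset _ _))
            · intro x hx
              by_cases hxa : x = a
              · subst hxa; exact mem_insert_self _ _
              · exact mem_insert_of_mem (hq2 (Finset.mem_erase.mpr ⟨hxa, hx⟩))
            · rintro p' ⟨hp'S, h1, h2⟩
              rcases mem_union.mp hp'S with hp' | hp'
              · exfalso
                have := (IH1.1 p' hp').2.1 (h2 hae)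
                simp only [mem_Ico] at this
                omega
              · obtain ⟨q', hq'S, hq'e⟩ := mem_image.mp hp'
                obtain ⟨hq'12, hq'2V, -⟩ := IH2.1 q' hq'S
                have haq'1 : a ∉ q'.1 := fun hmem => by
                  have := hq'2V (hq'12 hmem)
                  simp only [mem_Ico] at this; omega
                have h1' : q'.1 ⊆ e.erase a := by
                  intro x hx
                  refine Finset.mem_erase.mpr ⟨?_, ?_⟩
                  · rintro rfl; exact haq'1 hx
                  · subst hq'e
                    exact h1 (mem_insert_of_mem hx)
                have h2' : e.erase a ⊆ q'.2 := by
                  intro x hx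
                  obtain ⟨hxa, hxe⟩ := Finset.mem_erase.mp hx
                  subst hq'e
                  rcases mem_insert.mp (h2 hxe) with h | h
                  · exact absurd h hxa
                  · exact h
                have : q' = q := huq q' ⟨hq'S, h1', h2'⟩
                subst this
                exact hq'e.symm ▸ rfl
          · have heV : e ⊆ Finset.Ico (a+1) (a+1+n) := by
              intro x hx
              have := he hx
              simp only [mem_Ico] at this ⊢
              have : x ≠ a := fun h => hae (h ▸ hx)
              omega
            obtain ⟨q, ⟨hqS, hq1, hq2⟩, huq⟩ := IH1.2 e heV hce
            refine ⟨q, ⟨mem_union_left _ hqS, hq1, hq2⟩, ?_⟩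
            rintro p' ⟨hp'S, h1, h2⟩
            rcases mem_union.mp hp'S with hp' | hp'
            · exact huq p' ⟨hp', h1, h2⟩
            · exfalso
              obtain ⟨q', hq'S, hq'e⟩ := mem_image.mp hp'
              apply hae
              apply h1
              subst hq'e
              exact mem_insert_self _ _
  
/-- Partition of the *nonempty* faces of the `s`-truncated Boolean lattice on
ground set `Ico a (a+n)` (for `n ≥ s*s`), with tops of size `s` and nonempty bottoms. -/
def PX : ℕ → ℕ → ℕ → Finset Pr
  | 0, _, _ => ∅
  | s+1, a, n =>
      {({a+n-1}, Finset.Ico (a+(n-(s+1))) (a+n))} ∪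
      ((Finset.Ico (a+(n-(s+1))) (a+n-1)).powerset.erase ∅).biUnion
        (fun υ => Lift (insert (a+n-1) υ) (PX (s - υ.card) a (n-(s+1)))) ∪
      ((Finset.Ico (a+(n-(s+1))) (a+n-1)).powerset.erase ∅).biUnion
        (fun υ => Lift υ (QP a (n-(s+1)) (s+1-υ.card))) ∪
      (PX s a (n-(s+1))).image (fun q => (q.1, insert (a+n-1) q.2)) ∪
      (Finset.powersetCard (s+1) (Finset.Ico a (a+(n-(s+1))))).image (fun τ => (τ, τ))
termination_by s _ _ => s
decreasing_by all_goals omega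

lemma mem_PX_succ {s a n : ℕ} {p : Pr} :
    p ∈ PX (s+1) a n ↔
      p = ({a+n-1}, Finset.Ico (a+(n-(s+1))) (a+n)) ∨
      (∃ υ, υ ⊆ Finset.Ico (a+(n-(s+1))) (a+n-1) ∧ υ ≠ ∅ ∧
        ∃ q ∈ PX (s - υ.card) a (n-(s+1)),
          p = (insert (a+n-1) υ ∪ q.1, insert (a+n-1) υ ∪ q.2)) ∨
      (∃ υ, υ ⊆ Finset.Ico (a+(n-(s+1))) (a+n-1) ∧ υ ≠ ∅ ∧
        ∃ q ∈ QP a (n-(s+1)) (s+1-υ.card), p = (υ ∪ q.1, υ ∪ q.2)) ∨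
      (∃ q ∈ PX s a (n-(s+1)), p = (q.1, insert (a+n-1) q.2)) ∨
      (∃ τ, τ ⊆ Finset.Ico a (a+(n-(s+1))) ∧ τ.card = s+1 ∧ p = (τ, τ)) := by
  rw [PX]
  simp only [Lift, mem_union, mem_singleton, mem_biUnion, mem_erase, mem_powerset,
    mem_image, mem_powersetCard, ne_eq]
  constructor
  · rintro ((((h | ⟨υ, ⟨hne, hsub⟩, q, hq, rfl⟩) | ⟨υ, ⟨hne, hsub⟩, q, hq, rfl⟩) | ⟨q, hq, rfl⟩) | ⟨τ, ⟨hsub, hcard⟩, rfl⟩)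
    · exact Or.inl h
    · exact Or.inr (Or.inl ⟨υ, hsub, hne, q, hq, rfl⟩)
    · exact Or.inr (Or.inr (Or.inl ⟨υ, hsub, hne, q, hq, rfl⟩))
    · exact Or.inr (Or.inr (Or.inr (Or.inl ⟨q, hq, rfl⟩)))
    · exact Or.inr (Or.inr (Or.inr (Or.inr ⟨τ, hsub, hcard, rfl⟩)))
  · rintro (h | ⟨υ, hsub, hne, q, hq, rfl⟩ | ⟨υ, hsub, hne, q, hq, rfl⟩ | ⟨q, hq, rfl⟩ | ⟨τ, hsub, hcard, rfl⟩)
    · exact Or.inl (Or.inl (Or.inl (Or.inl h)))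
    · exact Or.inl (Or.inl (Or.inl (Or.inr ⟨υ, ⟨hne, hsub⟩, q, hq, rfl⟩)))
    · exact Or.inl (Or.inl (Or.inr ⟨υ, ⟨hne, hsub⟩, q, hq, rfl⟩))
    · exact Or.inl (Or.inr ⟨q, hq, rfl⟩)
    · exact Or.inr ⟨τ, ⟨hsub, hcard⟩, rfl⟩

lemma card_tripart {a c t n : ℕ} (hac : a ≤ c) (hct : c ≤ t) (htn : t + 1 = a + n)
    {e : Finset ℕ} (he : e ⊆ Finset.Ico a (a+n)) :
    e.card = (e ∩ Finset.Ico a c).card + (e ∩ Finset.Ico c t).card + (e ∩ {t}).card := by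
  have he2 : ((e ∩ Finset.Ico a c) ∪ (e ∩ Finset.Ico c t)) ∪ (e ∩ {t}) = e := by
    ext x
    simp only [mem_union, mem_inter, mem_Ico, mem_singleton]
    constructor
    · rintro ((⟨h, -⟩ | ⟨h, -⟩) | ⟨h, -⟩) <;> exact h
    · intro hx
      have hb := mem_Ico.mp (he hx)
      simp only [hx, true_and]
      omega
  have d1 : Disjoint (e ∩ Finset.Ico a c) (e ∩ Finset.Ico c t) := by
    rw [Finset.disjoint_left]
    intro x hx1 hx2
    simp only [mem_inter, mem_Ico] at hx1 hx2
    omega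
  have d2 : Disjoint ((e ∩ Finset.Ico a c) ∪ (e ∩ Finset.Ico c t)) (e ∩ {t}) := by
    rw [Finset.disjoint_left]
    intro x hx1 hx2
    simp only [mem_union, mem_inter, mem_Ico, mem_singleton] at hx1 hx2
    omega
  conv_lhs => rw [← he2]
  rw [Finset.card_union_of_disjoint d2, Finset.card_union_of_disjoint d1]

theorem PX_spec (s : ℕ) : ∀ a n, s*s ≤ n → IsPPart (PX s a n) (Finset.Ico a (a+n)) s := by
  induction s using Nat.strong_induction_on with
  | _ s ih =>
    cases s with
    | zero =>
      intro a n _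
      constructor
      · intro p hp
        simp [PX] at hp
      · intro e _ hene hce
        have : e = ∅ := Finset.card_eq_zero.mp (Nat.le_zero.mp hce)
        subst this
        simp at hene
    | succ s =>
      intro a n hn
      have hsq : (s+1)*(s+1) = s*s + 2*s + 1 := by ring
      -- abbreviations (spelled out): c = a+(n-(s+1)), t = a+n-1
      have hn1 : s + 1 ≤ n := by omega
      have hUcard : (Finset.Ico (a+(n-(s+1))) (a+n-1)).card = s := by
        rw [Nat.card_Ico]; omega
      have hVsubG : Finset.Ico a (a+(n-(s+1))) ⊆ Finset.Ico a (a+n) := by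
        intro x hx; simp only [mem_Ico] at *; omega
      -- inner ground arithmetic
      have hinner : s*s + s ≤ n - (s+1) := by omega
      have ihs := ih s (by omega) a (n-(s+1)) (by omega)
      have ihA2 : ∀ υ : Finset ℕ, υ ⊆ Finset.Ico (a+(n-(s+1))) (a+n-1) →
          IsPPart (PX (s - υ.card) a (n-(s+1))) (Finset.Ico a (a+(n-(s+1)))) (s - υ.card) := by
        intro υ hυ
        have h1 : (s - υ.card) * (s - υ.card) ≤ s*s :=
          Nat.mul_le_mul (Nat.sub_le _ _) (Nat.sub_le _ _)
        exact ih (s - υ.card) (by omega) a (n-(s+1)) (by omega)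
      have ihB : ∀ υ : Finset ℕ, υ ≠ ∅ → υ ⊆ Finset.Ico (a+(n-(s+1))) (a+n-1) →
          IsQPart (QP a (n-(s+1)) (s+1-υ.card)) (Finset.Ico a (a+(n-(s+1)))) (s+1-υ.card) := by
        intro υ hne hυ
        have hc1 : 1 ≤ υ.card := Finset.card_pos.mpr (Finset.nonempty_iff_ne_empty.mpr hne)
        exact QP_spec (n-(s+1)) (s+1-υ.card) a (by omega)
      have hυcard : ∀ υ : Finset ℕ, υ ⊆ Finset.Ico (a+(n-(s+1))) (a+n-1) → υ.card ≤ s := by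
        intro υ hυ
        calc υ.card ≤ _ := Finset.card_le_card hυ
        _ = s := hUcard
      constructor
      · -- part (1)
        intro p hp
        rcases mem_PX_succ.mp hp with h | ⟨υ,hυsub,hυne,q,hq,rfl⟩ | ⟨υ,hυsub,hυne,q,hq,rfl⟩
          | ⟨q,hq,rfl⟩ | ⟨τ,hτsub,hτcard,rfl⟩
        · subst h
          refine ⟨⟨a+n-1, by simp⟩, ?_, ?_, ?_⟩
          · intro x hx
            rw [mem_singleton] at hx
            subst hx
            simp only [mem_Ico]; omega
          · intro x hx
            simp only [mem_Ico] at hx ⊢; omega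
          · rw [Nat.card_Ico]; omega
        · -- A2
          obtain ⟨hq1ne, hq12, hq2V, hq2card⟩ := (ihA2 υ hυsub).1 q hq
          have hυc := hυcard υ hυsub
          have htυ : (a+n-1) ∉ υ := fun hmem => by
            have := hυsub hmem; simp only [mem_Ico] at this; omega
          have hdisj : Disjoint (insert (a+n-1) υ) q.2 := by
            rw [Finset.disjoint_left]
            intro x hx1 hx2
            have h2 := mem_Ico.mp (hq2V hx2)
            rcases mem_insert.mp hx1 with rfl | hx1
            · omega
            · have := mem_Ico.mp (hυsub hx1); omega
          refine ⟨⟨a+n-1, by simp⟩, Finset.union_subset_union Finset.Subset.rfl hq12, ?_, ?_⟩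
          · intro x hx
            rcases mem_union.mp hx with hx | hx
            · rcases mem_insert.mp hx with rfl | hx
              · simp only [mem_Ico]; omega
              · have := mem_Ico.mp (hυsub hx); simp only [mem_Ico]; omega
            · exact hVsubG (hq2V hx)
          · rw [Finset.card_union_of_disjoint hdisj, Finset.card_insert_of_notMem htυ,
              hq2card]
            omega
        · -- B
          obtain ⟨hq12, hq2V, hq2card⟩ := (ihB υ hυne hυsub).1 q hq
          have hυc := hυcard υ hυsub
          have hc1 : 1 ≤ υ.card := Finset.card_pos.mpr (Finset.nonempty_iff_ne_empty.mpr hυne)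
          have hdisj : Disjoint υ q.2 := by
            rw [Finset.disjoint_left]
            intro x hx1 hx2
            have h2 := mem_Ico.mp (hq2V hx2)
            have := mem_Ico.mp (hυsub hx1); omega
          obtain ⟨y, hy⟩ := Finset.nonempty_iff_ne_empty.mpr hυne
          refine ⟨⟨y, mem_union_left _ hy⟩, Finset.union_subset_union Finset.Subset.rfl hq12, ?_, ?_⟩
          · intro x hx
            rcases mem_union.mp hx with hx | hx
            · have := mem_Ico.mp (hυsub hx); simp only [mem_Ico]; omega
            · exact hVsubG (hq2V hx)
          · rw [Finset.card_union_of_disjoint hdisj, hq2card]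
            omega
        · -- C1
          obtain ⟨hq1ne, hq12, hq2V, hq2card⟩ := ihs.1 q hq
          have htq : (a+n-1) ∉ q.2 := fun hmem => by
            have := mem_Ico.mp (hq2V hmem); omega
          refine ⟨hq1ne, hq12.trans (Finset.subset_insert _ _), ?_, ?_⟩
          · intro x hx
            rcases mem_insert.mp hx with rfl | hx
            · simp only [mem_Ico]; omega
            · exact hVsubG (hq2V hx)
          · rw [Finset.card_insert_of_notMem htq, hq2card]
        · -- C2
          refine ⟨?_, Finset.Subset.rfl, hτsub.trans hVsubG, hτcard⟩
          rw [← Finset.card_pos, hτcard]; omega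
      · -- part (2)
        intro e heG hene hce
        have hetri := card_tripart (c := a+(n-(s+1))) (t := a+n-1)
          (by omega) (by omega) (by omega) heG
        by_cases hte : (a+n-1) ∈ e
        · have hcT : (e ∩ {a+n-1}).card = 1 := by
            rw [Finset.inter_singleton_of_mem hte]; simp
          by_cases hρ : (e ∩ Finset.Ico a (a+(n-(s+1)))).Nonempty
          · by_cases hυ : (e ∩ Finset.Ico (a+(n-(s+1))) (a+n-1)).Nonempty
            · -- CASE A2
              have hυsub : e ∩ Finset.Ico (a+(n-(s+1))) (a+n-1) ⊆
                  Finset.Ico (a+(n-(s+1))) (a+n-1) := Finset.inter_subset_right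
              have hυne : e ∩ Finset.Ico (a+(n-(s+1))) (a+n-1) ≠ ∅ :=
                Finset.nonempty_iff_ne_empty.mp hυ
              have hρcard : (e ∩ Finset.Ico a (a+(n-(s+1)))).card ≤
                  s - (e ∩ Finset.Ico (a+(n-(s+1))) (a+n-1)).card := by omega
              obtain ⟨q, ⟨hqS, hq1, hq2⟩, huq⟩ :=
                (ihA2 _ hυsub).2 (e ∩ Finset.Ico a (a+(n-(s+1)))) Finset.inter_subset_right
                  hρ hρcard
              refine ⟨(insert (a+n-1) (e ∩ Finset.Ico (a+(n-(s+1))) (a+n-1)) ∪ q.1,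
                       insert (a+n-1) (e ∩ Finset.Ico (a+(n-(s+1))) (a+n-1)) ∪ q.2),
                ⟨mem_PX_succ.mpr (Or.inr (Or.inl ⟨_, hυsub, hυne, q, hqS, rfl⟩)), ?_, ?_⟩, ?_⟩
              · apply Finset.union_subset
                · exact Finset.insert_subset hte Finset.inter_subset_left
                · exact hq1.trans Finset.inter_subset_left
              · intro x hx
                have hb := mem_Ico.mp (heG hx)
                by_cases hxC : x < a+(n-(s+1))
                · exact mem_union_right _ (hq2 (mem_inter.mpr ⟨hx, mem_Ico.mpr ⟨hb.1, hxC⟩⟩))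
                · by_cases hxT : x = a+n-1
                  · subst hxT; exact mem_union_left _ (mem_insert_self _ _)
                  · exact mem_union_left _ (mem_insert_of_mem
                      (mem_inter.mpr ⟨hx, mem_Ico.mpr ⟨by omega, by omega⟩⟩))
              · rintro p' ⟨hp'S, h1, h2⟩
                rcases mem_PX_succ.mp hp'S with h | ⟨υ',hυ'sub,hυ'ne,q',hq',rfl⟩
                  | ⟨υ',hυ'sub,hυ'ne,q',hq',rfl⟩ | ⟨q',hq',rfl⟩ | ⟨τ',hτ'sub,hτ'card,rfl⟩
                · exfalso
                  subst h
                  obtain ⟨y, hy⟩ := hρ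
                  have hy2 := mem_Ico.mp (Finset.mem_inter.mp hy).2
                  have := mem_Ico.mp (h2 (Finset.mem_inter.mp hy).1)
                  omega
                · -- A2 family
                  obtain ⟨hq'1ne, hq'12, hq'2V, -⟩ := (ihA2 υ' hυ'sub).1 q' hq'
                  have hυ'eq : υ' = e ∩ Finset.Ico (a+(n-(s+1))) (a+n-1) := by
                    apply Finset.Subset.antisymm
                    · intro x hx
                      refine mem_inter.mpr ⟨h1 (mem_union_left _ (mem_insert_of_mem hx)), hυ'sub hx⟩
                    · intro x hx
                      obtain ⟨hxe, hxI⟩ := mem_inter.mp hx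
                      have hxI' := mem_Ico.mp hxI
                      rcases mem_union.mp (h2 hxe) with h | h
                      · rcases mem_insert.mp h with rfl | h
                        · omega
                        · exact h
                      · exfalso
                        have := mem_Ico.mp (hq'2V h); omega
                  subst hυ'eq
                  have hq'sand : q'.1 ⊆ e ∩ Finset.Ico a (a+(n-(s+1))) ∧
                      e ∩ Finset.Ico a (a+(n-(s+1))) ⊆ q'.2 := by
                    constructor
                    · intro x hx
                      refine mem_inter.mpr ⟨h1 (mem_union_right _ hx), hq'12.trans hq'2V hx⟩
                    · intro x hx
                      obtain ⟨hxe, hxI⟩ := mem_inter.mp hx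
                      have hxI' := mem_Ico.mp hxI
                      rcases mem_union.mp (h2 hxe) with h | h
                      · exfalso
                        rcases mem_insert.mp h with rfl | h
                        · omega
                        · have := mem_Ico.mp (mem_inter.mp h).2
                          omega
                      · exact h
                  have : q' = q := huq q' ⟨hq', hq'sand.1, hq'sand.2⟩
                  rw [this]
                · -- B family
                  exfalso
                  obtain ⟨hq'12, hq'2V, -⟩ := (ihB υ' hυ'ne hυ'sub).1 q' hq'
                  rcases mem_union.mp (h2 hte) with h | h
                  · have := mem_Ico.mp (hυ'sub h); omega
                  · have := mem_Ico.mp (hq'2V h); omega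
                · -- C1 family
                  exfalso
                  obtain ⟨-, -, hq'2V, -⟩ := ihs.1 q' hq'
                  obtain ⟨y, hy⟩ := hυ
                  obtain ⟨hye, hyI⟩ := mem_inter.mp hy
                  have hyI' := mem_Ico.mp hyI
                  rcases mem_insert.mp (h2 hye) with rfl | h
                  · omega
                  · have := mem_Ico.mp (hq'2V h); omega
                · -- C2 family
                  exfalso
                  have := mem_Ico.mp (hτ'sub (h2 hte))
                  omega
            · -- CASE C1-a  (t ∈ e, ρ nonempty, e ∩ U = ∅)
              have hυe : e ∩ Finset.Ico (a+(n-(s+1))) (a+n-1) = ∅ :=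
                Finset.not_nonempty_iff_eq_empty.mp hυ
              have hρsub : e ∩ Finset.Ico a (a+(n-(s+1))) ⊆ Finset.Ico a (a+(n-(s+1))) :=
                Finset.inter_subset_right
              have hρcard : (e ∩ Finset.Ico a (a+(n-(s+1)))).card ≤ s := by
                rw [hυe] at hetri; simp at hetri; omega
              obtain ⟨q, ⟨hqS, hq1, hq2⟩, huq⟩ :=
                ihs.2 (e ∩ Finset.Ico a (a+(n-(s+1)))) hρsub hρ hρcard
              refine ⟨(q.1, insert (a+n-1) q.2),
                ⟨mem_PX_succ.mpr (Or.inr (Or.inr (Or.inr (Or.inl ⟨q, hqS, rfl⟩)))), ?_, ?_⟩, ?_⟩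
              · exact hq1.trans Finset.inter_subset_left
              · intro x hx
                have hb := mem_Ico.mp (heG hx)
                by_cases hxT : x = a+n-1
                · subst hxT; exact mem_insert_self _ _
                · by_cases hxC : x < a+(n-(s+1))
                  · exact mem_insert_of_mem (hq2 (mem_inter.mpr ⟨hx, mem_Ico.mpr ⟨hb.1, hxC⟩⟩))
                  · exfalso
                    have : x ∈ e ∩ Finset.Ico (a+(n-(s+1))) (a+n-1) :=
                      mem_inter.mpr ⟨hx, mem_Ico.mpr ⟨by omega, by omega⟩⟩
                    rw [hυe] at this
                    simp at this
              · rintro p' ⟨hp'S, h1, h2⟩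
                rcases mem_PX_succ.mp hp'S with h | ⟨υ',hυ'sub,hυ'ne,q',hq',rfl⟩
                  | ⟨υ',hυ'sub,hυ'ne,q',hq',rfl⟩ | ⟨q',hq',rfl⟩ | ⟨τ',hτ'sub,hτ'card,rfl⟩
                · exfalso
                  subst h
                  obtain ⟨y, hy⟩ := hρ
                  have hy2 := mem_Ico.mp (Finset.mem_inter.mp hy).2
                  have := mem_Ico.mp (h2 (Finset.mem_inter.mp hy).1)
                  omega
                · exfalso
                  obtain ⟨y, hy⟩ := Finset.nonempty_iff_ne_empty.mpr hυ'ne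
                  have hyI := mem_Ico.mp (hυ'sub hy)
                  have hye : y ∈ e := h1 (mem_union_left _ (mem_insert_of_mem hy))
                  have : y ∈ e ∩ Finset.Ico (a+(n-(s+1))) (a+n-1) :=
                    mem_inter.mpr ⟨hye, mem_Ico.mpr hyI⟩
                  rw [hυe] at this; simp at this
                · exfalso
                  obtain ⟨hq'12, hq'2V, -⟩ := (ihB υ' hυ'ne hυ'sub).1 q' hq'
                  rcases mem_union.mp (h2 hte) with h | h
                  · have := mem_Ico.mp (hυ'sub h); omega
                  · have := mem_Ico.mp (hq'2V h); omega
                · -- C1 family: the right one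
                  obtain ⟨-, hq'12, hq'2V, -⟩ := ihs.1 q' hq'
                  have hq'sand : q'.1 ⊆ e ∩ Finset.Ico a (a+(n-(s+1))) ∧
                      e ∩ Finset.Ico a (a+(n-(s+1))) ⊆ q'.2 := by
                    constructor
                    · intro x hx
                      exact mem_inter.mpr ⟨h1 hx, hq'12.trans hq'2V hx⟩
                    · intro x hx
                      obtain ⟨hxe, hxI⟩ := mem_inter.mp hx
                      have hxI' := mem_Ico.mp hxI
                      rcases mem_insert.mp (h2 hxe) with rfl | h
                      · omega
                      · exact h
                  have : q' = q := huq q' ⟨hq', hq'sand.1, hq'sand.2⟩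
                  rw [this]
                · exfalso
                  have := mem_Ico.mp (hτ'sub (h2 hte))
                  omega
          · -- CASE A1  (t ∈ e, e ∩ V' = ∅)
            have hρe : e ∩ Finset.Ico a (a+(n-(s+1))) = ∅ :=
              Finset.not_nonempty_iff_eq_empty.mp hρ
            refine ⟨({a+n-1}, Finset.Ico (a+(n-(s+1))) (a+n)),
              ⟨mem_PX_succ.mpr (Or.inl rfl), Finset.singleton_subset_iff.mpr hte, ?_⟩, ?_⟩
            · intro x hx
              have hb := mem_Ico.mp (heG hx)
              by_cases hxC : x < a+(n-(s+1))
              · exfalso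
                have : x ∈ e ∩ Finset.Ico a (a+(n-(s+1))) :=
                  mem_inter.mpr ⟨hx, mem_Ico.mpr ⟨hb.1, hxC⟩⟩
                rw [hρe] at this; simp at this
              · exact mem_Ico.mpr ⟨by omega, hb.2⟩
            · rintro p' ⟨hp'S, h1, h2⟩
              rcases mem_PX_succ.mp hp'S with h | ⟨υ',hυ'sub,hυ'ne,q',hq',rfl⟩
                | ⟨υ',hυ'sub,hυ'ne,q',hq',rfl⟩ | ⟨q',hq',rfl⟩ | ⟨τ',hτ'sub,hτ'card,rfl⟩
              · exact h
              · exfalso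
                obtain ⟨hq'1ne, hq'12, hq'2V, -⟩ := (ihA2 υ' hυ'sub).1 q' hq'
                obtain ⟨y, hy⟩ := hq'1ne
                have hye : y ∈ e := h1 (mem_union_right _ hy)
                have hyV := mem_Ico.mp (hq'2V (hq'12 hy))
                have : y ∈ e ∩ Finset.Ico a (a+(n-(s+1))) :=
                  mem_inter.mpr ⟨hye, mem_Ico.mpr hyV⟩
                rw [hρe] at this; simp at this
              · exfalso
                obtain ⟨hq'12, hq'2V, -⟩ := (ihB υ' hυ'ne hυ'sub).1 q' hq'
                rcases mem_union.mp (h2 hte) with h | h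
                · have := mem_Ico.mp (hυ'sub h); omega
                · have := mem_Ico.mp (hq'2V h); omega
              · exfalso
                obtain ⟨hq'1ne, hq'12, hq'2V, -⟩ := ihs.1 q' hq'
                obtain ⟨y, hy⟩ := hq'1ne
                have hye : y ∈ e := h1 hy
                have hyV := mem_Ico.mp (hq'2V (hq'12 hy))
                have : y ∈ e ∩ Finset.Ico a (a+(n-(s+1))) :=
                  mem_inter.mpr ⟨hye, mem_Ico.mpr hyV⟩
                rw [hρe] at this; simp at this
              · exfalso
                have := mem_Ico.mp (hτ'sub (h2 hte))
                omega
        · -- t ∉ e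
          have hcT : (e ∩ {a+n-1}).card = 0 := by
            rw [Finset.card_eq_zero]
            rw [Finset.eq_empty_iff_forall_notMem]
            intro x hx
            obtain ⟨hxe, hxt⟩ := mem_inter.mp hx
            rw [mem_singleton] at hxt
            exact hte (hxt ▸ hxe)
          by_cases hυ : (e ∩ Finset.Ico (a+(n-(s+1))) (a+n-1)).Nonempty
          · -- CASE B
            have hυsub : e ∩ Finset.Ico (a+(n-(s+1))) (a+n-1) ⊆
                Finset.Ico (a+(n-(s+1))) (a+n-1) := Finset.inter_subset_right
            have hυne : e ∩ Finset.Ico (a+(n-(s+1))) (a+n-1) ≠ ∅ :=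
              Finset.nonempty_iff_ne_empty.mp hυ
            have hρcard : (e ∩ Finset.Ico a (a+(n-(s+1)))).card ≤
                s + 1 - (e ∩ Finset.Ico (a+(n-(s+1))) (a+n-1)).card := by omega
            obtain ⟨q, ⟨hqS, hq1, hq2⟩, huq⟩ :=
              (ihB _ hυne hυsub).2 (e ∩ Finset.Ico a (a+(n-(s+1)))) Finset.inter_subset_right
                hρcard
            refine ⟨(e ∩ Finset.Ico (a+(n-(s+1))) (a+n-1) ∪ q.1,
                     e ∩ Finset.Ico (a+(n-(s+1))) (a+n-1) ∪ q.2),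
              ⟨mem_PX_succ.mpr (Or.inr (Or.inr (Or.inl ⟨_, hυsub, hυne, q, hqS, rfl⟩))), ?_, ?_⟩, ?_⟩
            · exact Finset.union_subset Finset.inter_subset_left (hq1.trans Finset.inter_subset_left)
            · intro x hx
              have hb := mem_Ico.mp (heG hx)
              by_cases hxC : x < a+(n-(s+1))
              · exact mem_union_right _ (hq2 (mem_inter.mpr ⟨hx, mem_Ico.mpr ⟨hb.1, hxC⟩⟩))
              · have hxT : x ≠ a+n-1 := fun h => hte (h ▸ hx)
                exact mem_union_left _ (mem_inter.mpr ⟨hx, mem_Ico.mpr ⟨by omega, by omega⟩⟩)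
            · rintro p' ⟨hp'S, h1, h2⟩
              rcases mem_PX_succ.mp hp'S with h | ⟨υ',hυ'sub,hυ'ne,q',hq',rfl⟩
                | ⟨υ',hυ'sub,hυ'ne,q',hq',rfl⟩ | ⟨q',hq',rfl⟩ | ⟨τ',hτ'sub,hτ'card,rfl⟩
              · exfalso
                subst h
                exact hte (h1 (mem_singleton_self _))
              · exfalso
                exact hte (h1 (mem_union_left _ (mem_insert_self _ _)))
              · -- B family: the right one
                obtain ⟨hq'12, hq'2V, -⟩ := (ihB υ' hυ'ne hυ'sub).1 q' hq'
                have hυ'eq : υ' = e ∩ Finset.Ico (a+(n-(s+1))) (a+n-1) := by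
                  apply Finset.Subset.antisymm
                  · intro x hx
                    exact mem_inter.mpr ⟨h1 (mem_union_left _ hx), hυ'sub hx⟩
                  · intro x hx
                    obtain ⟨hxe, hxI⟩ := mem_inter.mp hx
                    have hxI' := mem_Ico.mp hxI
                    rcases mem_union.mp (h2 hxe) with h | h
                    · exact h
                    · exfalso
                      have := mem_Ico.mp (hq'2V h); omega
                subst hυ'eq
                have hq'sand : q'.1 ⊆ e ∩ Finset.Ico a (a+(n-(s+1))) ∧
                    e ∩ Finset.Ico a (a+(n-(s+1))) ⊆ q'.2 := by
                  constructor
                  · intro x hx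
                    exact mem_inter.mpr ⟨h1 (mem_union_right _ hx), hq'12.trans hq'2V hx⟩
                  · intro x hx
                    obtain ⟨hxe, hxI⟩ := mem_inter.mp hx
                    have hxI' := mem_Ico.mp hxI
                    rcases mem_union.mp (h2 hxe) with h | h
                    · exfalso
                      have := mem_Ico.mp (mem_inter.mp h).2
                      omega
                    · exact h
                have : q' = q := huq q' ⟨hq', hq'sand.1, hq'sand.2⟩
                rw [this]
              · exfalso
                obtain ⟨-, -, hq'2V, -⟩ := ihs.1 q' hq'
                obtain ⟨y, hy⟩ := hυ
                obtain ⟨hye, hyI⟩ := mem_inter.mp hy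
                have hyI' := mem_Ico.mp hyI
                rcases mem_insert.mp (h2 hye) with rfl | h
                · omega
                · have := mem_Ico.mp (hq'2V h); omega
              · exfalso
                obtain ⟨y, hy⟩ := hυ
                obtain ⟨hye, hyI⟩ := mem_inter.mp hy
                have hyI' := mem_Ico.mp hyI
                have := mem_Ico.mp (hτ'sub (h2 hye))
                omega
          · -- CASE e ⊆ V'
            have hυe : e ∩ Finset.Ico (a+(n-(s+1))) (a+n-1) = ∅ :=
              Finset.not_nonempty_iff_eq_empty.mp hυ
            have heV : e ⊆ Finset.Ico a (a+(n-(s+1))) := by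
              intro x hx
              have hb := mem_Ico.mp (heG hx)
              have hxT : x ≠ a+n-1 := fun h => hte (h ▸ hx)
              by_cases hxC : x < a+(n-(s+1))
              · exact mem_Ico.mpr ⟨hb.1, hxC⟩
              · exfalso
                have : x ∈ e ∩ Finset.Ico (a+(n-(s+1))) (a+n-1) :=
                  mem_inter.mpr ⟨hx, mem_Ico.mpr ⟨by omega, by omega⟩⟩
                rw [hυe] at this; simp at this
            have hTV : (a+n-1) ∉ Finset.Ico a (a+(n-(s+1))) := by
              simp only [mem_Ico]; omega
            by_cases hcard : e.card = s+1
            · -- CASE C2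
              refine ⟨(e, e),
                ⟨mem_PX_succ.mpr (Or.inr (Or.inr (Or.inr (Or.inr ⟨e, heV, hcard, rfl⟩)))),
                  Finset.Subset.rfl, Finset.Subset.rfl⟩, ?_⟩
              rintro p' ⟨hp'S, h1, h2⟩
              rcases mem_PX_succ.mp hp'S with h | ⟨υ',hυ'sub,hυ'ne,q',hq',rfl⟩
                | ⟨υ',hυ'sub,hυ'ne,q',hq',rfl⟩ | ⟨q',hq',rfl⟩ | ⟨τ',hτ'sub,hτ'card,rfl⟩
              · exfalso
                subst h
                exact hTV (heV (h1 (mem_singleton_self _)))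
              · exfalso
                exact hTV (heV (h1 (mem_union_left _ (mem_insert_self _ _))))
              · exfalso
                obtain ⟨y, hy⟩ := Finset.nonempty_iff_ne_empty.mpr hυ'ne
                have hyI := mem_Ico.mp (hυ'sub hy)
                have := mem_Ico.mp (heV (h1 (mem_union_left _ hy)))
                omega
              · exfalso
                obtain ⟨-, -, hq'2V, hq'card⟩ := ihs.1 q' hq'
                have hesub : e ⊆ q'.2 := by
                  intro x hx
                  rcases mem_insert.mp (h2 hx) with rfl | h
                  · exact absurd (heV hx) hTV
                  · exact h
                have := Finset.card_le_card hesub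
                omega
              · have : τ' = e := Finset.Subset.antisymm h1 h2
                subst this
                rfl
            · -- CASE C1-b
              have hcard' : e.card ≤ s := by omega
              obtain ⟨q, ⟨hqS, hq1, hq2⟩, huq⟩ := ihs.2 e heV hene hcard'
              refine ⟨(q.1, insert (a+n-1) q.2),
                ⟨mem_PX_succ.mpr (Or.inr (Or.inr (Or.inr (Or.inl ⟨q, hqS, rfl⟩)))), hq1,
                  hq2.trans (Finset.subset_insert _ _)⟩, ?_⟩
              rintro p' ⟨hp'S, h1, h2⟩
              rcases mem_PX_succ.mp hp'S with h | ⟨υ',hυ'sub,hυ'ne,q',hq',rfl⟩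
                | ⟨υ',hυ'sub,hυ'ne,q',hq',rfl⟩ | ⟨q',hq',rfl⟩ | ⟨τ',hτ'sub,hτ'card,rfl⟩
              · exfalso
                subst h
                exact hTV (heV (h1 (mem_singleton_self _)))
              · exfalso
                exact hTV (heV (h1 (mem_union_left _ (mem_insert_self _ _))))
              · exfalso
                obtain ⟨y, hy⟩ := Finset.nonempty_iff_ne_empty.mpr hυ'ne
                have hyI := mem_Ico.mp (hυ'sub hy)
                have := mem_Ico.mp (heV (h1 (mem_union_left _ hy)))
                omega
              · have hesub : e ⊆ q'.2 := by
                  intro x hx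
                  rcases mem_insert.mp (h2 hx) with rfl | h
                  · exact absurd (heV hx) hTV
                  · exact h
                have : q' = q := huq q' ⟨hq', h1, hesub⟩
                rw [this]
              · exfalso
                have heq : τ' = e := Finset.Subset.antisymm h1 h2
                rw [heq] at hτ'card
                exact hcard hτ'card

/-! ### Assembly: the partition extender -/

/-- The extender complex: all unions of a face of `Δ` with a set of fresh vertices
from `Ico M (M+m*m)`, of total size at most `m`. -/
def Gam (Δ : Finset (Finset ℕ)) (m M : ℕ) : Finset (Finset ℕ) :=
  Δ.biUnion fun σ =>
    ((Finset.Ico M (M+m*m)).powerset.filter fun ω => σ.card + ω.card ≤ m).image fun ω => σ ∪ ω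

section Main

variable {Δ : Finset (Finset ℕ)} {m M : ℕ}

lemma sdiff_W_self {σ : Finset ℕ} (h : ∀ x ∈ σ, x < M) :
    σ \ Finset.Ico M (M+m*m) = σ := by
  apply Finset.sdiff_eq_self_iff_disjoint.mpr
  rw [Finset.disjoint_left]
  intro x hx hx2
  have := h x hx
  have := (mem_Ico.mp hx2).1
  omega

lemma union_sdiff_W {σ ω : Finset ℕ} (h : ∀ x ∈ σ, x < M) (hω : ω ⊆ Finset.Ico M (M+m*m)) :
    (σ ∪ ω) \ Finset.Ico M (M+m*m) = σ := by
  rw [Finset.union_sdiff_distrib, sdiff_W_self h,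
    Finset.sdiff_eq_empty_iff_subset.mpr hω, Finset.union_empty]

lemma mem_Gam (hM : ∀ σ ∈ Δ, ∀ x ∈ σ, x < M) {τ : Finset ℕ} :
    τ ∈ Gam Δ m M ↔ τ \ Finset.Ico M (M+m*m) ∈ Δ ∧ τ.card ≤ m := by
  constructor
  · intro hτ
    obtain ⟨σ, hσ, ω, hω, rfl⟩ := by
      simpa only [Gam, mem_biUnion, mem_image, mem_filter, mem_powerset] using hτ
    obtain ⟨hωW, hcards⟩ := hω
    constructor
    · rw [union_sdiff_W (hM σ hσ) hωW]; exact hσ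
    · calc (σ ∪ ω).card ≤ σ.card + ω.card := Finset.card_union_le _ _
        _ ≤ m := hcards
  · rintro ⟨h1, h2⟩
    simp only [Gam, mem_biUnion, mem_image, mem_filter, mem_powerset]
    refine ⟨τ \ Finset.Ico M (M+m*m), h1, τ ∩ Finset.Ico M (M+m*m),
      ⟨Finset.inter_subset_right, ?_⟩, Finset.sdiff_union_inter _ _⟩
    rw [Finset.card_sdiff_add_card_inter]
    exact h2

lemma Gam_complex (hΔ : IsComplex Δ) (hM : ∀ σ ∈ Δ, ∀ x ∈ σ, x < M) :
    IsComplex (Gam Δ m M) := by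
  intro τ hτ τ' hτ'
  rw [mem_Gam hM] at hτ ⊢
  exact ⟨hΔ _ hτ.1 _ (Finset.sdiff_subset_sdiff hτ' Finset.Subset.rfl),
    le_trans (Finset.card_le_card hτ') hτ.2⟩

lemma subset_Gam (hM : ∀ σ ∈ Δ, ∀ x ∈ σ, x < M) (hcard : ∀ σ ∈ Δ, σ.card ≤ m) :
    Δ ⊆ Gam Δ m M := by
  intro σ hσ
  rw [mem_Gam hM]
  rw [sdiff_W_self (hM σ hσ)]
  exact ⟨hσ, hcard σ hσ⟩

lemma Gam_card_le (hM : ∀ σ ∈ Δ, ∀ x ∈ σ, x < M) {τ : Finset ℕ} (hτ : τ ∈ Gam Δ m M) :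
    τ.card ≤ m := ((mem_Gam hM).mp hτ).2

lemma Gam_facet_card (hM : ∀ σ ∈ Δ, ∀ x ∈ σ, x < M) {F : Finset ℕ}
    (hF : IsFacet (Gam Δ m M) F) : F.card = m := by
  obtain ⟨hFG, hmax⟩ := hF
  have hle := Gam_card_le hM hFG
  by_contra hne
  have hlt : F.card < m := by omega
  -- find a fresh vertex not in F
  have hWF : ¬ (Finset.Ico M (M+m*m) ⊆ F) := by
    intro hsub
    have := Finset.card_le_card hsub
    rw [Nat.card_Ico] at this
    have hmm : m ≤ m*m := Nat.le_mul_of_pos_left m (by omega)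
    omega
  obtain ⟨w, hwW, hwF⟩ := Finset.not_subset.mp hWF
  have hF' : insert w F ∈ Gam Δ m M := by
    rw [mem_Gam hM]
    rw [Finset.insert_sdiff_of_mem _ hwW]
    refine ⟨((mem_Gam hM).mp hFG).1, ?_⟩
    rw [Finset.card_insert_of_notMem hwF]
    omega
  have := hmax _ hF' (Finset.subset_insert _ _)
  exact hwF (this ▸ mem_insert_self w F)

/-- The global partition of `Gam`. -/
def SG (Δ : Finset (Finset ℕ)) (m M : ℕ) : Finset Pr :=
  Δ.biUnion fun σ => Lift σ (QP M (m*m) (m - σ.card))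

/-- The partition of the relative complex `Gam \ Δ`. -/
def SR (Δ : Finset (Finset ℕ)) (m M : ℕ) : Finset Pr :=
  Δ.biUnion fun σ => Lift σ (PX (m - σ.card) M (m*m))

lemma mem_SG {p : Pr} :
    p ∈ SG Δ m M ↔ ∃ σ ∈ Δ, ∃ q ∈ QP M (m*m) (m - σ.card), p = (σ ∪ q.1, σ ∪ q.2) := by
  simp only [SG, Lift, mem_biUnion, mem_image]
  constructor
  · rintro ⟨σ, hσ, q, hq, rfl⟩; exact ⟨σ, hσ, q, hq, rfl⟩
  · rintro ⟨σ, hσ, q, hq, rfl⟩; exact ⟨σ, hσ, q, hq, rfl⟩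

lemma mem_SR {p : Pr} :
    p ∈ SR Δ m M ↔ ∃ σ ∈ Δ, ∃ q ∈ PX (m - σ.card) M (m*m), p = (σ ∪ q.1, σ ∪ q.2) := by
  simp only [SR, Lift, mem_biUnion, mem_image]
  constructor
  · rintro ⟨σ, hσ, q, hq, rfl⟩; exact ⟨σ, hσ, q, hq, rfl⟩
  · rintro ⟨σ, hσ, q, hq, rfl⟩; exact ⟨σ, hσ, q, hq, rfl⟩

lemma QPm (hcard : ∀ σ ∈ Δ, σ.card ≤ m) {σ : Finset ℕ} (hσ : σ ∈ Δ) :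
    IsQPart (QP M (m*m) (m - σ.card)) (Finset.Ico M (M+m*m)) (m - σ.card) := by
  have h1 : m ≤ m*m := by
    rcases Nat.eq_zero_or_pos m with h | h
    · simp [h]
    · exact Nat.le_mul_of_pos_left m h
  exact QP_spec (m*m) (m - σ.card) M (by omega)

lemma QPm' (hcard : ∀ σ ∈ Δ, σ.card ≤ m) {σ : Finset ℕ} (hσ : σ ∈ Δ) :
    IsQPart (QP M (m*m) (m - σ.card)) (Finset.Ico M (M+m*m)) (m - σ.card) := QPm hcard hσ

lemma PXm {σ : Finset ℕ} :
    IsPPart (PX (m - σ.card) M (m*m)) (Finset.Ico M (M+m*m)) (m - σ.card) :=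
  PX_spec (m - σ.card) M (m*m)
    (Nat.mul_le_mul (Nat.sub_le _ _) (Nat.sub_le _ _))

/-- Recovery of the `Δ`-part: if `σ ∪ α ⊆ e ⊆ σ ∪ β` with `α, β ⊆ W` and `σ` fresh-free,
then `e \ W = σ`. -/
lemma recover_sigma {σ α β e : Finset ℕ} (hσ : ∀ x ∈ σ, x < M)
    (hβ : β ⊆ Finset.Ico M (M+m*m)) (h1 : σ ∪ α ⊆ e) (h2 : e ⊆ σ ∪ β) :
    e \ Finset.Ico M (M+m*m) = σ := by
  apply Finset.Subset.antisymm
  · intro x hx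
    obtain ⟨hxe, hxW⟩ := Finset.mem_sdiff.mp hx
    rcases mem_union.mp (h2 hxe) with h | h
    · exact h
    · exact absurd (hβ h) hxW
  · intro x hx
    refine Finset.mem_sdiff.mpr ⟨h1 (mem_union_left _ hx), ?_⟩
    intro hxW
    have := hσ x hx
    have := (mem_Ico.mp hxW).1
    omega

theorem SG_partitioning (hΔ : IsComplex Δ) (hM : ∀ σ ∈ Δ, ∀ x ∈ σ, x < M)
    (hcard : ∀ σ ∈ Δ, σ.card ≤ m) :
    IsPartitioning (SG Δ m M) (Gam Δ m M) := by
  have key : ∀ p ∈ SG Δ m M, p.1 ⊆ p.2 ∧ p.2 ∈ Gam Δ m M ∧ p.2.card = m := by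
    intro p hp
    obtain ⟨σ, hσ, q, hq, rfl⟩ := mem_SG.mp hp
    obtain ⟨hq12, hq2V, hq2c⟩ := (QPm hcard hσ).1 q hq
    have hdisj : Disjoint σ q.2 := by
      rw [Finset.disjoint_left]
      intro x hx1 hx2
      have := hM σ hσ x hx1
      have := (mem_Ico.mp (hq2V hx2)).1
      omega
    refine ⟨Finset.union_subset_union Finset.Subset.rfl hq12, ?_, ?_⟩
    · rw [mem_Gam hM, union_sdiff_W (hM σ hσ) hq2V]
      refine ⟨hσ, ?_⟩
      rw [Finset.card_union_of_disjoint hdisj, hq2c]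
      have := hcard σ hσ
      omega
    · rw [Finset.card_union_of_disjoint hdisj, hq2c]
      have := hcard σ hσ
      omega
  refine ⟨?_, ?_, ?_⟩
  · intro p hp
    obtain ⟨h1, h2, h3⟩ := key p hp
    refine ⟨h1, h2, fun c hc hsub => ?_⟩
    apply Finset.eq_of_subset_of_card_le hsub
    rw [h3]
    exact Gam_card_le hM hc
  · intro p hp e he1 he2
    obtain ⟨σ, hσ, q, hq, rfl⟩ := mem_SG.mp hp
    obtain ⟨hq12, hq2V, hq2c⟩ := (QPm hcard hσ).1 q hq
    rw [mem_Gam hM]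
    constructor
    · rw [recover_sigma (hM σ hσ) hq2V he1 he2]
      exact hσ
    · calc e.card ≤ (σ ∪ q.2).card := Finset.card_le_card he2
        _ = m := (key _ hp).2.2
  · intro e he
    rw [mem_Gam hM] at he
    obtain ⟨hσΔ, hecard⟩ := he
    have hωcard : (e ∩ Finset.Ico M (M+m*m)).card ≤ m - (e \ Finset.Ico M (M+m*m)).card := by
      have := Finset.card_sdiff_add_card_inter e (Finset.Ico M (M+m*m))
      have := hcard _ hσΔ
      omega
    obtain ⟨q, ⟨hqS, hq1, hq2⟩, huq⟩ :=
      (QPm hcard hσΔ).2 (e ∩ Finset.Ico M (M+m*m)) Finset.inter_subset_right hωcard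
    refine ⟨(e \ Finset.Ico M (M+m*m) ∪ q.1, e \ Finset.Ico M (M+m*m) ∪ q.2),
      ⟨mem_SG.mpr ⟨_, hσΔ, q, hqS, rfl⟩, ?_, ?_⟩, ?_⟩
    · exact Finset.union_subset (Finset.sdiff_subset) (hq1.trans Finset.inter_subset_left)
    · intro x hx
      by_cases hxW : x ∈ Finset.Ico M (M+m*m)
      · exact mem_union_right _ (hq2 (mem_inter.mpr ⟨hx, hxW⟩))
      · exact mem_union_left _ (Finset.mem_sdiff.mpr ⟨hx, hxW⟩)
    · rintro p' ⟨hp'S, h1, h2⟩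
      obtain ⟨σ', hσ', q', hq', rfl⟩ := mem_SG.mp hp'S
      obtain ⟨hq'12, hq'2V, -⟩ := (QPm hcard hσ').1 q' hq'
      have hσ'eq : σ' = e \ Finset.Ico M (M+m*m) :=
        (recover_sigma (hM σ' hσ') hq'2V h1 h2).symm
      subst hσ'eq
      have hq'sand : q'.1 ⊆ e ∩ Finset.Ico M (M+m*m) ∧ e ∩ Finset.Ico M (M+m*m) ⊆ q'.2 := by
        constructor
        · intro x hx
          exact mem_inter.mpr ⟨h1 (mem_union_right _ hx), hq'2V (hq'12 hx)⟩
        · intro x hx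
          obtain ⟨hxe, hxW⟩ := mem_inter.mp hx
          rcases mem_union.mp (h2 hxe) with h | h
          · exact absurd hxW (Finset.mem_sdiff.mp h).2
          · exact h
      have : q' = q := huq q' ⟨hq', hq'sand.1, hq'sand.2⟩
      rw [this]

theorem SR_partitioning (hΔ : IsComplex Δ) (hM : ∀ σ ∈ Δ, ∀ x ∈ σ, x < M)
    (hcard : ∀ σ ∈ Δ, σ.card ≤ m) :
    IsPartitioning (SR Δ m M) (Gam Δ m M \ Δ) := by
  have hnotΔ : ∀ {f : Finset ℕ}, f ∈ Δ → ∀ {y}, y ∈ f → y ∈ Finset.Ico M (M+m*m) → False := by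
    intro f hf y hy hyW
    have := hM f hf y hy
    have := (mem_Ico.mp hyW).1
    omega
  have key : ∀ p ∈ SR Δ m M, p.1 ⊆ p.2 ∧ p.2 ∈ Gam Δ m M \ Δ ∧ p.2.card = m ∧
      (∀ e, p.1 ⊆ e → e ⊆ p.2 → e ∈ Gam Δ m M \ Δ) := by
    intro p hp
    obtain ⟨σ, hσ, q, hq, rfl⟩ := mem_SR.mp hp
    obtain ⟨hq1ne, hq12, hq2V, hq2c⟩ := PXm.1 q hq
    have hdisj : Disjoint σ q.2 := by
      rw [Finset.disjoint_left]
      intro x hx1 hx2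
      exact hnotΔ hσ hx1 (hq2V hx2)
    have hσm := hcard σ hσ
    have hcard2 : (σ ∪ q.2).card = m := by
      rw [Finset.card_union_of_disjoint hdisj, hq2c]
      omega
    obtain ⟨y, hy⟩ := hq1ne
    have hyW := hq2V (hq12 hy)
    have hmemsd : ∀ e : Finset ℕ, σ ∪ q.1 ⊆ e → e ⊆ σ ∪ q.2 → e ∈ Gam Δ m M \ Δ := by
      intro e h1 h2
      rw [Finset.mem_sdiff]
      constructor
      · rw [mem_Gam hM]
        rw [recover_sigma (hM σ hσ) hq2V h1 h2]
        refine ⟨hσ, le_trans (Finset.card_le_card h2) (le_of_eq hcard2)⟩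
      · intro heΔ
        exact hnotΔ heΔ (h1 (mem_union_right _ hy)) hyW
    refine ⟨Finset.union_subset_union Finset.Subset.rfl hq12, ?_, hcard2, hmemsd⟩
    exact hmemsd _ (Finset.union_subset_union Finset.Subset.rfl hq12) Finset.Subset.rfl
  refine ⟨?_, ?_, ?_⟩
  · intro p hp
    obtain ⟨h1, h2, h3, -⟩ := key p hp
    refine ⟨h1, h2, fun c hc hsub => ?_⟩
    apply Finset.eq_of_subset_of_card_le hsub
    rw [h3]
    exact Gam_card_le hM (Finset.mem_sdiff.mp hc).1
  · intro p hp e he1 he2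
    exact (key p hp).2.2.2 e he1 he2
  · intro e he
    obtain ⟨heG, heΔ⟩ := Finset.mem_sdiff.mp he
    rw [mem_Gam hM] at heG
    obtain ⟨hσΔ, hecard⟩ := heG
    have hωne : (e ∩ Finset.Ico M (M+m*m)).Nonempty := by
      rw [Finset.nonempty_iff_ne_empty]
      intro hemp
      apply heΔ
      have : e \ Finset.Ico M (M+m*m) = e := by
        apply Finset.sdiff_eq_self_iff_disjoint.mpr
        rw [Finset.disjoint_iff_inter_eq_empty]
        exact hemp
      rw [this] at hσΔ
      exact hσΔ
    have hωcard : (e ∩ Finset.Ico M (M+m*m)).card ≤ m - (e \ Finset.Ico M (M+m*m)).card := by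
      have := Finset.card_sdiff_add_card_inter e (Finset.Ico M (M+m*m))
      have := hcard _ hσΔ
      omega
    obtain ⟨q, ⟨hqS, hq1, hq2⟩, huq⟩ :=
      (PXm (σ := e \ Finset.Ico M (M+m*m))).2 (e ∩ Finset.Ico M (M+m*m))
        Finset.inter_subset_right hωne hωcard
    refine ⟨(e \ Finset.Ico M (M+m*m) ∪ q.1, e \ Finset.Ico M (M+m*m) ∪ q.2),
      ⟨mem_SR.mpr ⟨_, hσΔ, q, hqS, rfl⟩, ?_, ?_⟩, ?_⟩
    · exact Finset.union_subset (Finset.sdiff_subset) (hq1.trans Finset.inter_subset_left)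
    · intro x hx
      by_cases hxW : x ∈ Finset.Ico M (M+m*m)
      · exact mem_union_right _ (hq2 (mem_inter.mpr ⟨hx, hxW⟩))
      · exact mem_union_left _ (Finset.mem_sdiff.mpr ⟨hx, hxW⟩)
    · rintro p' ⟨hp'S, h1, h2⟩
      obtain ⟨σ', hσ', q', hq', rfl⟩ := mem_SR.mp hp'S
      obtain ⟨-, hq'12, hq'2V, -⟩ := (PXm (σ := σ')).1 q' hq'
      have hσ'eq : σ' = e \ Finset.Ico M (M+m*m) :=
        (recover_sigma (hM σ' hσ') hq'2V h1 h2).symm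
      subst hσ'eq
      have hq'sand : q'.1 ⊆ e ∩ Finset.Ico M (M+m*m) ∧ e ∩ Finset.Ico M (M+m*m) ⊆ q'.2 := by
        constructor
        · intro x hx
          exact mem_inter.mpr ⟨h1 (mem_union_right _ hx), hq'2V (hq'12 hx)⟩
        · intro x hx
          obtain ⟨hxe, hxW⟩ := mem_inter.mp hx
          rcases mem_union.mp (h2 hxe) with h | h
          · exact absurd hxW (Finset.mem_sdiff.mp h).2
          · exact h
      have : q' = q := huq q' ⟨hq', hq'sand.1, hq'sand.2⟩
      rw [this]

lemma exists_facet_above (hΔne : True) {σ : Finset ℕ} (hσ : σ ∈ Δ) :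
    ∃ F, IsFacet Δ F ∧ σ ⊆ F := by
  have hA : (Δ.filter (fun τ => σ ⊆ τ)).Nonempty :=
    ⟨σ, Finset.mem_filter.mpr ⟨hσ, Finset.Subset.rfl⟩⟩
  obtain ⟨F, hF, hFmax⟩ := Finset.exists_max_image _ (fun τ => τ.card) hA
  obtain ⟨hFΔ, hσF⟩ := Finset.mem_filter.mp hF
  refine ⟨F, ⟨hFΔ, fun G hG hFG => ?_⟩, hσF⟩
  apply Finset.eq_of_subset_of_card_le hFG
  exact hFmax G (Finset.mem_filter.mpr ⟨hG, hσF.trans hFG⟩)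

end Main

end PE

/-- Every pure simplicial complex `Δ` has a partition extender: a pure complex `Γ` of the
same dimension with `Δ ⊆ Γ` such that both `Γ` and the relative complex `(Γ, Δ)` are
partitionable. -/
theorem every_pure_complex_has_partition_extender
    (d : ℤ) (Δ : Finset (Finset ℕ)) (hΔ : IsComplex Δ) (hpure : PureDim Δ d) :
    ∃ Γ : Finset (Finset ℕ), IsComplex Γ ∧ PureDim Γ d ∧ Δ ⊆ Γ ∧
      Partitionable Γ ∧ Partitionable (Γ \ Δ) := by

  obtain ⟨hne, hfac⟩ := hpure
  obtain ⟨σ₀, hσ₀⟩ := hne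
  have hEmp : ∅ ∈ Δ := hΔ σ₀ hσ₀ ∅ (Finset.empty_subset _)
  obtain ⟨F₀, hF₀, -⟩ := PE.exists_facet_above trivial hEmp
  set m := F₀.card with hm
  have hmZ : (m : ℤ) = d + 1 := hfac F₀ hF₀
  have hcard : ∀ σ ∈ Δ, σ.card ≤ m := by
    intro σ hσ
    obtain ⟨F, hF, hσF⟩ := PE.exists_facet_above trivial hσ
    have : (F.card : ℤ) = d + 1 := hfac F hF
    have hFm : F.card = m := by
      have : (F.card : ℤ) = (m : ℤ) := by rw [this, hmZ]
      exact_mod_cast this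
    calc σ.card ≤ F.card := Finset.card_le_card hσF
      _ = m := hFm
  set M := (Δ.sup fun σ => σ.sup id) + 1 with hMdef
  have hM : ∀ σ ∈ Δ, ∀ x ∈ σ, x < M := by
    intro σ hσ x hx
    have h1 : x ≤ σ.sup id := Finset.le_sup (f := id) hx
    have h2 : σ.sup id ≤ Δ.sup fun σ => σ.sup id := Finset.le_sup (f := fun σ => σ.sup id) hσ
    omega
  refine ⟨PE.Gam Δ m M, PE.Gam_complex hΔ hM, ?_, PE.subset_Gam hM hcard,
    ⟨PE.SG Δ m M, PE.SG_partitioning hΔ hM hcard⟩,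
    ⟨PE.SR Δ m M, PE.SR_partitioning hΔ hM hcard⟩⟩
  constructor
  · exact ⟨σ₀, PE.subset_Gam hM hcard hσ₀⟩
  · intro F hF
    rw [PE.Gam_facet_card hM hF]
    exact hmZ
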